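/- Let k be a field, p a nonzero Laurent polynomial over k of 'degree span' d (the difference between the largest and smallest exponents with nonzero coefficient). Then the kernel of the shift operator θ(p) acting on k^ℤ is a k-vector space of dimension d; in particular a trajectory in the kernel is determined by its values on any d consecutive time points. -/

import Mathlib

/-- The shift operator induced by a Laurent polynomial `p = Σ aᵢ sⁱ` on biinfinite
sequences, as a `k`-linear map: `(θ p w) t = Σ aᵢ w (t - i)`. -/
noncomputable def theta {k : Type*} [Field k]
    (p : LaurentPolynomial k) : (ℤ → k) →ₗ[k] (ℤ → k) where
  toFun w t := Finsupp.sum p.coeff fun i a => a * w (t - i)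
  map_add' w v := by
    funext t
    simp [Finsupp.sum, mul_add, Finset.sum_add_distrib]
  map_smul' c w := by
    funext t
    simp [Finsupp.sum, Finset.mul_sum, mul_left_comm]

namespace KerThetaAux

variable {k : Type*} [Field k]

lemma mem_ker_iff (p : LaurentPolynomial k) (w : ℤ → k) :
    w ∈ LinearMap.ker (theta p) ↔ ∀ t : ℤ, ∑ i ∈ p.coeff.support, p.coeff i * w (t - i) = 0 := by
  simp [LinearMap.mem_ker, theta, funext_iff, Finsupp.sum, LinearMap.coe_mk]

/-- A kernel trajectory vanishing on a window of length `d` vanishes everywhere. -/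
lemma eq_zero_of_window (p : LaurentPolynomial k) (m M : ℤ) (d : ℕ)
    (hm : m ∈ p.coeff.support) (hM : M ∈ p.coeff.support)
    (hmin : ∀ i ∈ p.coeff.support, m ≤ i) (hmax : ∀ i ∈ p.coeff.support, i ≤ M)
    (hd : (d : ℤ) = M - m)
    (w : ℤ → k) (hw : ∀ t : ℤ, ∑ i ∈ p.coeff.support, p.coeff i * w (t - i) = 0)
    (t₀ : ℤ) (h0 : ∀ t : ℤ, t₀ ≤ t → t < t₀ + d → w t = 0) :
    ∀ t : ℤ, w t = 0 := by
  have hpm : p.coeff m ≠ 0 := Finsupp.mem_support_iff.mp hm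
  have hpM : p.coeff M ≠ 0 := Finsupp.mem_support_iff.mp hM
  have hup : ∀ n : ℕ, ∀ t : ℤ, t₀ ≤ t → t < t₀ + d + n → w t = 0 := by
    intro n
    induction n with
    | zero => exact fun t h1 h2 => h0 t h1 (by omega)
    | succ n ih =>
      intro t h1 h2
      by_cases hc : t < t₀ + d + n
      · exact ih t h1 hc
      have ht : t = t₀ + d + n := by omega
      have heq := hw (t + m)
      rw [← Finset.add_sum_erase _ _ hm] at heq
      have hz : ∀ i ∈ p.coeff.support.erase m, p.coeff i * w (t + m - i) = 0 := by
        intro i hi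
        have hi' := Finset.mem_of_mem_erase hi
        have hne := Finset.ne_of_mem_erase hi
        have h1' := hmin i hi'
        have h2' := hmax i hi'
        rw [ih (t + m - i) (by omega) (by omega), mul_zero]
      rw [Finset.sum_eq_zero hz, add_zero] at heq
      have : w (t + m - m) = 0 := by
        rcases mul_eq_zero.mp heq with h | h
        · exact absurd h hpm
        · exact h
      simpa using this
  have hup' : ∀ t : ℤ, t₀ ≤ t → w t = 0 := fun t ht =>
    hup ((t - t₀).toNat + 1) t ht (by omega)
  have hdown : ∀ n : ℕ, ∀ t : ℤ, t₀ - n ≤ t → w t = 0 := by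
    intro n
    induction n with
    | zero => exact fun t ht => hup' t (by omega)
    | succ n ih =>
      intro t h1
      by_cases hc : t₀ - n ≤ t
      · exact ih t hc
      have ht : t = t₀ - n - 1 := by omega
      have heq := hw (t + M)
      rw [← Finset.add_sum_erase _ _ hM] at heq
      have hz : ∀ i ∈ p.coeff.support.erase M, p.coeff i * w (t + M - i) = 0 := by
        intro i hi
        have hi' := Finset.mem_of_mem_erase hi
        have hne := Finset.ne_of_mem_erase hi
        have h2' := hmax i hi'
        rw [ih (t + M - i) (by omega), mul_zero]
      rw [Finset.sum_eq_zero hz, add_zero] at heq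
      have : w (t + M - M) = 0 := by
        rcases mul_eq_zero.mp heq with h | h
        · exact absurd h hpM
        · exact h
      simpa using this
  intro t
  exact hdown (t₀ - t).toNat t (by omega)

/-- Forward construction of a solution from `d` initial values at `0,…,d-1`. -/
noncomputable def fwd (p : LaurentPolynomial k) (m : ℤ) (d : ℕ) (v : Fin d → k)
    (hmem : ∀ i ∈ p.coeff.support.erase m, 0 < i - m ∧ i - m ≤ (d : ℤ)) : ℕ → k
  | j =>
    if h : j < d then v ⟨j, h⟩
    else -(p.coeff m)⁻¹ * ∑ i ∈ (p.coeff.support.erase m).attach,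
        p.coeff i.1 * fwd p m d v hmem (j - (i.1 - m).toNat)
  termination_by j => j
  decreasing_by
    have := hmem i.1 i.2
    omega

/-- Backward construction: `bwd … j` is the value of the solution at `-1 - j`. -/
noncomputable def bwd (p : LaurentPolynomial k) (M : ℤ) (d : ℕ) (f : ℕ → k)
    (hmem : ∀ i ∈ p.coeff.support.erase M, 0 < M - i ∧ M - i ≤ (d : ℤ)) : ℕ → k
  | j =>
    -(p.coeff M)⁻¹ * ∑ i ∈ (p.coeff.support.erase M).attach,
      p.coeff i.1 * (if h : (j : ℤ) < M - i.1 then f (M - i.1 - j - 1).toNat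
               else bwd p M d f hmem (j - (M - i.1).toNat))
  termination_by j => j
  decreasing_by
    have := hmem i.1 i.2
    omega

end KerThetaAux

/-- For a nonzero Laurent polynomial `p` of degree span `d` (difference of the largest
and smallest exponents with nonzero coefficient), the kernel of the shift operator
`θ(p)` on `k^ℤ` has dimension `d`; in particular a kernel trajectory is determined by
its values at any `d` consecutive time points. -/
theorem ker_theta_finrank_eq_degree_span {k : Type*} [Field k]
    (p : LaurentPolynomial k) (hp : p ≠ 0)
    (d : ℕ)
    (hd : (d : ℤ) = p.coeff.support.max' (Finsupp.support_nonempty_iff.mpr (mt AddMonoidAlgebra.coeff_eq_zero.mp hp))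
        - p.coeff.support.min' (Finsupp.support_nonempty_iff.mpr (mt AddMonoidAlgebra.coeff_eq_zero.mp hp))) :
    Module.finrank k (LinearMap.ker (theta p)) = d ∧
    ∀ w w' : ℤ → k, w ∈ LinearMap.ker (theta p) → w' ∈ LinearMap.ker (theta p) →
      ∀ t₀ : ℤ, (∀ t : ℤ, t₀ ≤ t → t < t₀ + d → w t = w' t) → w = w' := by
  classical
  open KerThetaAux in
  set hne := Finsupp.support_nonempty_iff.mpr (mt AddMonoidAlgebra.coeff_eq_zero.mp hp)
  set M := p.coeff.support.max' hne with hMdef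
  set m := p.coeff.support.min' hne with hmdef
  have hm : m ∈ p.coeff.support := p.coeff.support.min'_mem hne
  have hM : M ∈ p.coeff.support := p.coeff.support.max'_mem hne
  have hmin : ∀ i ∈ p.coeff.support, m ≤ i := fun i hi => p.coeff.support.min'_le i hi
  have hmax : ∀ i ∈ p.coeff.support, i ≤ M := fun i hi => p.coeff.support.le_max' i hi
  have hpm : p.coeff m ≠ 0 := Finsupp.mem_support_iff.mp hm
  have hpM : p.coeff M ≠ 0 := Finsupp.mem_support_iff.mp hM
  have hmemF : ∀ i ∈ p.coeff.support.erase m, 0 < i - m ∧ i - m ≤ (d : ℤ) := by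
    intro i hi
    have hi' := Finset.mem_of_mem_erase hi
    have hne' := Finset.ne_of_mem_erase hi
    have := hmin i hi'; have := hmax i hi'
    omega
  have hmemB : ∀ i ∈ p.coeff.support.erase M, 0 < M - i ∧ M - i ≤ (d : ℤ) := by
    intro i hi
    have hi' := Finset.mem_of_mem_erase hi
    have hne' := Finset.ne_of_mem_erase hi
    have := hmin i hi'; have := hmax i hi'
    omega
  -- uniqueness part
  have uniq : ∀ w w' : ℤ → k, w ∈ LinearMap.ker (theta p) → w' ∈ LinearMap.ker (theta p) →
      ∀ t₀ : ℤ, (∀ t : ℤ, t₀ ≤ t → t < t₀ + d → w t = w' t) → w = w' := by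
    intro w w' hwk hw'k t₀ hinit
    have hsub : (w - w') ∈ LinearMap.ker (theta p) := Submodule.sub_mem _ hwk hw'k
    have hz := eq_zero_of_window p m M d hm hM hmin hmax hd (w - w')
      ((mem_ker_iff p (w - w')).mp hsub) t₀
      (fun t h1 h2 => by simp [hinit t h1 h2])
    funext t
    have := hz t
    simpa [sub_eq_zero] using this
  refine ⟨?_, uniq⟩
  -- the evaluation map on the window [0, d)
  let E : LinearMap.ker (theta p) →ₗ[k] (Fin d → k) :=
    LinearMap.pi fun j : Fin d =>
      (LinearMap.proj ((j : ℤ))).comp (Submodule.subtype _)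
  have hinj : Function.Injective E := by
    rw [injective_iff_map_eq_zero]
    intro w hw0
    ext t
    refine eq_zero_of_window p m M d hm hM hmin hmax hd w.1
      ((mem_ker_iff p w.1).mp w.2) 0 ?_ t
    intro s h1 h2
    have : w.1 ((⟨s.toNat, by omega⟩ : Fin d) : ℤ) = 0 := congrFun hw0 ⟨s.toNat, by omega⟩
    simpa [show ((s.toNat : ℤ)) = s by omega] using this
  have hsurj : Function.Surjective E := by
    intro v
    -- construct the solution
    set F : ℕ → k := fwd p m d v hmemF with hF
    set B : ℕ → k := bwd p M d F hmemB with hB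
    set W : ℤ → k := fun t => if 0 ≤ t then F t.toNat else B (-1 - t).toNat with hW
    have hWF : ∀ t : ℤ, 0 ≤ t → W t = F t.toNat := by
      intro t ht; simp [hW, ht]
    have hWB : ∀ t : ℤ, t < 0 → W t = B (-1 - t).toNat := by
      intro t ht; simp [hW, not_le.mpr ht]
    have hker : ∀ t : ℤ, ∑ i ∈ p.coeff.support, p.coeff i * W (t - i) = 0 := by
      intro t
      by_cases hcase : (d : ℤ) ≤ t - m
      · -- forward recurrence
        have hTm : 0 ≤ t - m := by omega
        have key : ∀ i ∈ p.coeff.support.erase m,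
            p.coeff i * W (t - i) = p.coeff i * F ((t - m).toNat - (i - m).toNat) := by
          intro i hi
          have h := hmemF i hi
          have hi' := Finset.mem_of_mem_erase hi
          have h2' := hmax i hi'
          have hge : 0 ≤ t - i := by omega
          rw [hWF _ hge]
          have harg : (t - i).toNat = (t - m).toNat - (i - m).toNat := by omega
          rw [harg]
        rw [← Finset.add_sum_erase _ _ hm, Finset.sum_congr rfl key,
          hWF _ hTm]
        rw [hF, fwd]
        rw [dif_neg (by omega)]
        rw [← Finset.sum_attach (p.coeff.support.erase m)
          (fun i => p.coeff i * F ((t - m).toNat - (i - m).toNat))]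
        rw [← hF]
        field_simp
        ring
      · -- backward recurrence
        have hTM : t - M < 0 := by omega
        have hj : (-1 - (t - M)).toNat = (M - t - 1).toNat := by omega
        set j : ℕ := (M - t - 1).toNat with hjdef
        have hjval : (j : ℤ) = M - t - 1 := by omega
        have key : ∀ i ∈ p.coeff.support.erase M,
            p.coeff i * W (t - i) = p.coeff i *
              (if h : (j : ℤ) < M - i then F (M - i - j - 1).toNat
               else B (j - (M - i).toNat)) := by
          intro i hi
          have h := hmemB i hi
          by_cases hlt : (j : ℤ) < M - i
          · rw [dif_pos hlt]
            have hge : 0 ≤ t - i := by omega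
            rw [hWF _ hge]
            have harg : (t - i).toNat = (M - i - j - 1).toNat := by omega
            rw [harg]
          · rw [dif_neg hlt]
            have hlt' : t - i < 0 := by omega
            rw [hWB _ hlt']
            have harg : (-1 - (t - i)).toNat = j - (M - i).toNat := by omega
            rw [harg]
        rw [← Finset.add_sum_erase _ _ hM, Finset.sum_congr rfl key,
          hWB _ hTM, hj]
        conv_lhs => rw [hB, bwd]
        rw [← Finset.sum_attach (p.coeff.support.erase M)
          (fun i => p.coeff i * (if h : (j : ℤ) < M - i then F (M - i - j - 1).toNat
               else bwd p M d F hmemB (j - (M - i).toNat)))]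
        rw [← hB]
        field_simp
        ring
    have hWmem : W ∈ LinearMap.ker (theta p) := (mem_ker_iff p W).mpr hker
    refine ⟨⟨W, hWmem⟩, ?_⟩
    funext r
    show W ((r : ℤ)) = v r
    rw [hWF _ (by omega)]
    rw [hF, fwd]
    rw [dif_pos (by omega : ((r : ℤ)).toNat < d)]
    congr

  have := LinearEquiv.finrank_eq (LinearEquiv.ofBijective E ⟨hinj, hsurj⟩)
  rw [this, Module.finrank_fin_fun]
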